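/- Let k be a field of characteristic different from 2. If a group G admits a connected grading of the diagonal algebra k × k (with componentwise operations), then either G is trivial or G is cyclic of order 2. In particular, the support of any grading of k × k has at most two elements, and any nontrivial degree s in the support satisfies s² = 1. -/
import Mathlib


/-- Let `k` be a field of characteristic different from 2.  If a group `G` admits a
connected grading of the diagonal algebra `k × k`, then `G` is trivial or cyclic of order
2; in particular the support of the grading has at most two elements and every nontrivial
degree `s` in the support satisfies `s² = 1`. -/
theorem stmt11 (k : Type*) [Field k] (hchar : ringChar k ≠ 2)
    (G : Type*) [Group G] (X : G → Submodule k (k × k))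
    (hind : iSupIndep X) (hsup : (⨆ g, X g) = ⊤)
    (hmul : ∀ g h, X g * X h ≤ X (g * h))
    (hconn : Subgroup.closure {g | X g ≠ ⊥} = ⊤) :
    ((∀ g : G, g = 1) ∨ (IsCyclic G ∧ Nat.card G = 2)) ∧
    {g | X g ≠ ⊥}.Finite ∧ {g | X g ≠ ⊥}.ncard ≤ 2 ∧
    (∀ s ∈ {g | X g ≠ ⊥}, s ≠ 1 → s ^ 2 = 1) := by
  classical
  -- decompose 1
  obtain ⟨f, hf, hf1⟩ := (Submodule.mem_iSup_iff_exists_finsupp X (1 : k × k)).1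
    (hsup ▸ Submodule.mem_top)
  -- f 1 is a right identity on each homogeneous component
  have key : ∀ h : G, ∀ x ∈ X h, x * f 1 = x := by
    intro h x hx
    have hx1 : x * f 1 ∈ X h := by
      have := hmul h 1 (Submodule.mul_mem_mul hx (hf 1))
      rwa [mul_one] at this
    have hsum : x = ∑ g ∈ f.support ∪ {1}, x * f g := by
      have hone : ∑ g ∈ f.support ∪ {1}, f g = 1 := by
        rw [← Finset.sum_subset (Finset.subset_union_left)
          (fun g _ hg => Finsupp.notMem_support_iff.1 hg)]
        exact hf1
      calc x = x * 1 := (mul_one x).symm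
        _ = x * ∑ g ∈ f.support ∪ {1}, f g := by rw [hone]
        _ = ∑ g ∈ f.support ∪ {1}, x * f g := Finset.mul_sum ..
    have h1mem : (1 : G) ∈ f.support ∪ {1} := Finset.mem_union_right _ (Finset.mem_singleton_self 1)
    have hrest : x - x * f 1 ∈ ⨆ g' ≠ h, X g' := by
      have heq : x = x * f 1 + ∑ g ∈ (f.support ∪ {1}).erase 1, x * f g := by
        rw [Finset.add_sum_erase _ (fun g => x * f g) h1mem]; exact hsum
      have : x - x * f 1 = ∑ g ∈ (f.support ∪ {1}).erase 1, x * f g :=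
        sub_eq_of_eq_add' heq
      rw [this]
      refine Submodule.sum_mem _ fun g hg => ?_
      have hg1 : g ≠ 1 := Finset.ne_of_mem_erase hg
      have : x * f g ∈ X (h * g) := hmul h g (Submodule.mul_mem_mul hx (hf g))
      exact Submodule.mem_iSup_of_mem (h * g)
        (Submodule.mem_iSup_of_mem (by simpa using hg1) this)
    have : x - x * f 1 = 0 :=
      Submodule.disjoint_def.mp (hind h) _ (Submodule.sub_mem _ hx hx1) hrest
    exact (sub_eq_zero.1 this).symm
  -- f 1 = 1, so X 1 ≠ ⊥
  have hfone : f 1 = 1 := by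
    have hx : ∀ x : k × k, x * f 1 = x := by
      intro x
      obtain ⟨g', hg', hgsum⟩ := (Submodule.mem_iSup_iff_exists_finsupp X x).1
        (hsup ▸ Submodule.mem_top)
      calc x * f 1 = (g'.sum fun _ xi => xi) * f 1 := by rw [hgsum]
        _ = g'.sum fun i xi => xi * f 1 := Finsupp.sum_mul ..
        _ = g'.sum fun _ xi => xi := Finsupp.sum_congr fun i _ => key i _ (hg' i)
        _ = x := hgsum
    have := hx 1
    rwa [one_mul] at this
  have h1ne : X 1 ≠ ⊥ := by
    intro hb
    have : (1 : k × k) ∈ X 1 := hfone ▸ hf 1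
    rw [hb, Submodule.mem_bot] at this
    exact one_ne_zero this
  -- squares of support elements are in the support
  have hsq : ∀ s : G, X s ≠ ⊥ → X (s * s) ≠ ⊥ := by
    intro s hs
    obtain ⟨v, hv, hv0⟩ := (X s).exists_mem_ne_zero_of_ne_bot hs
    intro hb
    have hvv : v * v ∈ X (s * s) := hmul s s (Submodule.mul_mem_mul hv hv)
    rw [hb, Submodule.mem_bot] at hvv
    apply hv0
    have h1 : v.1 * v.1 = 0 := congrArg Prod.fst hvv
    have h2 : v.2 * v.2 = 0 := congrArg Prod.snd hvv
    exact Prod.ext (mul_self_eq_zero.1 h1) (mul_self_eq_zero.1 h2)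
  -- finiteness and cardinality of the support
  haveI : Fintype {g // X g ≠ ⊥} := hind.fintypeNeBotOfFiniteDimensional
  have hfin : {g | X g ≠ ⊥}.Finite :=
    Set.finite_coe_iff.mp (Finite.of_fintype {g // X g ≠ ⊥})
  have hcard : {g | X g ≠ ⊥}.ncard ≤ 2 := by
    have h2 : Module.finrank k (k × k) = 2 := by
      rw [Module.finrank_prod, Module.finrank_self]
    calc {g | X g ≠ ⊥}.ncard = Nat.card {g // X g ≠ ⊥} :=
          (Nat.card_coe_set_eq _).symm
      _ = Fintype.card {g // X g ≠ ⊥} := Nat.card_eq_fintype_card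
      _ ≤ Module.finrank k (k × k) := hind.subtype_ne_bot_le_finrank
      _ = 2 := h2
  -- there is no room for three distinct support elements
  have hthree : ∀ a b c : G, a ≠ b → a ≠ c → b ≠ c →
      X a ≠ ⊥ → X b ≠ ⊥ → X c ≠ ⊥ → False := by
    intro a b c hab hac hbc ha hb hc
    have hsub : ({a, b, c} : Set G) ⊆ {g | X g ≠ ⊥} := by
      rintro t (rfl | rfl | rfl) <;> assumption
    have h3 : ({a, b, c} : Set G).ncard = 3 := by
      rw [Set.ncard_insert_of_notMem (by simp [hab, hac]),
        Set.ncard_insert_of_notMem (by simp [hbc]), Set.ncard_singleton]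
    have := Set.ncard_le_ncard hsub hfin
    omega
  -- nontrivial support elements square to 1
  have hs2 : ∀ s : G, X s ≠ ⊥ → s ≠ 1 → s ^ 2 = 1 := by
    intro s hs hs1
    by_contra hss
    rw [pow_two] at hss
    have hss' : s * s ≠ s := fun h => hs1 (mul_left_cancel (h.trans (mul_one s).symm))
    exact hthree 1 s (s * s) (Ne.symm hs1) (Ne.symm hss) (Ne.symm hss') h1ne hs (hsq s hs)
  refine ⟨?_, hfin, hcard, fun s hs hs1 => hs2 s hs hs1⟩
  by_cases hex : ∃ s : G, s ≠ 1 ∧ X s ≠ ⊥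
  · obtain ⟨s, hs1, hs⟩ := hex
    right
    have hsupp : {g | X g ≠ ⊥} ⊆ ↑(Subgroup.zpowers s) := by
      intro t ht
      by_cases ht1 : t = 1
      · rw [ht1]; exact SetLike.mem_coe.2 (one_mem _)
      by_cases hts : t = s
      · rw [hts]; exact SetLike.mem_coe.2 (Subgroup.mem_zpowers s)
      exact absurd (hthree 1 s t (Ne.symm hs1) (Ne.symm ht1) (Ne.symm hts) h1ne hs ht) id
    have ztop : Subgroup.zpowers s = ⊤ := by
      rw [eq_top_iff, ← hconn]
      exact Subgroup.closure_le _ |>.2 hsupp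
    constructor
    · exact ⟨⟨s, fun x => by show x ∈ Subgroup.zpowers s; rw [ztop]; trivial⟩⟩
    · have hord : orderOf s = 2 := orderOf_eq_prime (hs2 s hs hs1) hs1
      rw [← hord, ← Nat.card_zpowers, ztop, Subgroup.card_top]
  · left
    push_neg at hex
    have : {g | X g ≠ ⊥} ⊆ {1} := fun t ht =>
      Set.mem_singleton_iff.2 (by by_contra h; exact ht (hex t h))
    have hbot : (⊤ : Subgroup G) ≤ ⊥ := by
      rw [← hconn, ← Subgroup.closure_singleton_one]
      exact Subgroup.closure_mono this
    intro g
    exact Subgroup.mem_bot.1 (hbot (Subgroup.mem_top g))
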